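/- arXiv:1807.10725 — 3 statements merged into one kernel-verified Lean document; each statement's English description precedes it below -/
import Mathlib

section
/- Recursion for multi-rooted graphs: let I ⊆ J be finite nonempty subsets of ℕ, and fix points (x_j)_{j∈J} in X. Let ι = min I, I' = I \ {ι}, J' = J \ {ι}. Then ψ(I,J;(x_j)) = (∏_{i∈I'}(1+f(x_ι,x_i))) · ∑_{L ⊆ J\I} (∏_{ℓ∈L} f(x_ι,x_ℓ)) · ψ(I'∪L, J'; (x_j)_{j∈J'}), where ψ(I,J;·) = ∑_{G ∈ D(I,J)} ∏_{{i,j}∈E(G)} f(x_i,x_j), D(I,J) being the set of graphs on vertex set J in which every vertex connects by a path to some vertex of I, with the conventions ψ(∅,∅;·)=1 and ψ(∅,J;·)=0 for J≠∅. -/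
open scoped Classical

/-- Adjacency relation of a graph encoded as a finite set of (ordered) edges. -/
def adjOf (E : Finset (ℕ × ℕ)) : ℕ → ℕ → Prop :=
  fun u v => (u, v) ∈ E ∨ (v, u) ∈ E

/-- `ψ(I, J; x) = ∑_{G ∈ D(I,J)} ∏_{{i,j} ∈ E(G)} f(x_i, x_j)`, where `D(I,J)` is the
set of graphs on vertex set `J` (encoded by their edge sets, edges being pairs
`(i, j)` with `i < j` in `J`) in which every vertex of `J` is connected by a path
to some vertex of `I`.  With this encoding `ψ(∅,∅;·) = 1` and `ψ(∅,J;·) = 0` for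
`J ≠ ∅`. -/
noncomputable def psiMulti {X : Type*} (f : X → X → ℝ) (I J : Finset ℕ) (x : ℕ → X) : ℝ :=
  ∑ E ∈ ((J ×ˢ J).filter (fun p => p.1 < p.2)).powerset.filter
      (fun E => ∀ j ∈ J, ∃ i ∈ I, Relation.ReflTransGen (adjOf E) j i),
    ∏ p ∈ E, f (x p.1) (x p.2)

/-- Edges of a vertex set. -/
def edgesOf (J : Finset ℕ) : Finset (ℕ × ℕ) := (J ×ˢ J).filter (fun p => p.1 < p.2)

lemma adjOf_symm {E : Finset (ℕ × ℕ)} {u v : ℕ} (h : adjOf E u v) : adjOf E v u := h.symm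

lemma adjOf_mono {E E' : Finset (ℕ × ℕ)} (h : E ⊆ E') {u v : ℕ} (huv : adjOf E u v) :
    adjOf E' u v := huv.imp (@h _) (@h _)

/-- Forward connectivity: paths avoiding ι or hitting a neighbour of ι. -/
lemma conn_forward {E : Finset (ℕ × ℕ)} {ι j i : ℕ}
    (h : Relation.ReflTransGen (adjOf E) j i) (hj : j ≠ ι) :
    ∃ m, m ≠ ι ∧ (m = i ∨ adjOf E ι m) ∧
      Relation.ReflTransGen (adjOf (E.filter (fun p => p.1 ≠ ι ∧ p.2 ≠ ι))) j m := by
  induction h using Relation.ReflTransGen.head_induction_on with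
  | refl => exact ⟨i, hj, Or.inl rfl, Relation.ReflTransGen.refl⟩
  | @head a c hjk hki ih =>
    by_cases hc : c = ι
    · subst hc
      exact ⟨a, hj, Or.inr (adjOf_symm hjk), Relation.ReflTransGen.refl⟩
    · obtain ⟨m, hm, hm2, hpath⟩ := ih hc
      refine ⟨m, hm, hm2, Relation.ReflTransGen.head ?_ hpath⟩
      rcases hjk with h1 | h1
      · exact Or.inl (Finset.mem_filter.mpr ⟨h1, hj, hc⟩)
      · exact Or.inr (Finset.mem_filter.mpr ⟨h1, hc, hj⟩)


/-- The canonical ordered edge between `ι` and `n`. -/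
def gmap (ι n : ℕ) : ℕ × ℕ := if ι < n then (ι, n) else (n, ι)

lemma adjOf_gmap {ι n : ℕ} {E : Finset (ℕ × ℕ)} (h : gmap ι n ∈ E) : adjOf E ι n := by
  unfold gmap at h
  split at h
  · exact Or.inl h
  · exact Or.inr h

lemma gmap_injOn {ι : ℕ} {N : Finset ℕ} (_hN : ι ∉ N) :
    Set.InjOn (gmap ι) ↑N := by
  intro a ha b hb hab
  unfold gmap at hab
  split at hab <;> split at hab <;>
    simp only [Prod.mk.injEq] at hab
  · exact hab.2
  · omega
  · omega
  · exact hab.1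

lemma conn_backward {E' E'' : Finset (ℕ × ℕ)} {ι : ℕ} {I J N : Finset ℕ}
    (hι : ι ∈ I) (hsub : E' ⊆ E'') (hN : ∀ n ∈ N, adjOf E'' ι n)
    (h : ∀ j ∈ J.erase ι, ∃ i ∈ (I.erase ι) ∪ N, Relation.ReflTransGen (adjOf E') j i) :
    ∀ j ∈ J, ∃ i ∈ I, Relation.ReflTransGen (adjOf E'') j i := by
  intro j hj
  by_cases hjι : j = ι
  · exact ⟨ι, hι, hjι ▸ Relation.ReflTransGen.refl⟩
  · obtain ⟨i, hi, hpath⟩ := h j (Finset.mem_erase.mpr ⟨hjι, hj⟩)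
    have hpath' : Relation.ReflTransGen (adjOf E'') j i :=
      Relation.ReflTransGen.mono (r := adjOf E') (p := adjOf E'') (fun a b hab => adjOf_mono hsub hab) j i hpath
    rcases Finset.mem_union.mp hi with hi' | hi'
    · exact ⟨i, Finset.mem_of_mem_erase hi', hpath'⟩
    · exact ⟨ι, hι, hpath'.tail (adjOf_symm (hN i hi'))⟩


lemma mem_edges {J : Finset ℕ} {p : ℕ × ℕ} :
    p ∈ (J ×ˢ J).filter (fun p => p.1 < p.2) ↔ p.1 ∈ J ∧ p.2 ∈ J ∧ p.1 < p.2 := by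
  simp [Finset.mem_filter, Finset.mem_product, and_assoc]

lemma decomp {ι : ℕ} {J : Finset ℕ} {E : Finset (ℕ × ℕ)}
    (hEsub : E ⊆ (J ×ˢ J).filter (fun p => p.1 < p.2)) :
    E.filter (fun p => p.1 ≠ ι ∧ p.2 ≠ ι) ∪
      ((J.erase ι).filter (fun n => (ι,n) ∈ E ∨ (n,ι) ∈ E)).image (gmap ι) = E := by
  ext p
  simp only [Finset.mem_union, Finset.mem_filter, Finset.mem_image, Finset.mem_erase]
  constructor
  · rintro (⟨hp, -⟩ | ⟨n, ⟨⟨hnι, hnJ⟩, hn⟩, rfl⟩)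
    · exact hp
    · unfold gmap
      split
      · rcases hn with h1 | h1
        · exact h1
        · exact absurd (mem_edges.mp (hEsub h1)).2.2 (by omega)
      · rcases hn with h1 | h1
        · exact absurd (mem_edges.mp (hEsub h1)).2.2 (by omega)
        · exact h1
  · intro hp
    obtain ⟨h1, h2, h3⟩ := mem_edges.mp (hEsub hp)
    by_cases hp1 : p.1 = ι
    · right
      refine ⟨p.2, ⟨⟨by omega, h2⟩, Or.inl ?_⟩, ?_⟩
      · rwa [← hp1, Prod.mk.eta]
      · unfold gmap; rw [if_pos (by omega), ← hp1, Prod.mk.eta]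
    · by_cases hp2 : p.2 = ι
      · right
        refine ⟨p.1, ⟨⟨by omega, h1⟩, Or.inr ?_⟩, ?_⟩
        · rwa [← hp2, Prod.mk.eta]
        · unfold gmap; rw [if_neg (by omega), ← hp2, Prod.mk.eta]
      · exact Or.inl ⟨hp, hp1, hp2⟩

lemma psi_step {X : Type*} (f : X → X → ℝ) (hf : ∀ x y, f x y = f y x)
    {ι : ℕ} {I J : Finset ℕ} (hι : ι ∈ I) (hIJ : I ⊆ J) (x : ℕ → X) :
    psiMulti f I J x =
      ∑ N ∈ (J.erase ι).powerset,
        (∏ n ∈ N, f (x ι) (x n)) * psiMulti f ((I.erase ι) ∪ N) (J.erase ι) x := by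
  unfold psiMulti
  simp only [Finset.mul_sum]
  rw [Finset.sum_sigma']
  refine Finset.sum_bij'
    (fun E _ => ⟨(J.erase ι).filter (fun n => (ι,n) ∈ E ∨ (n,ι) ∈ E),
      E.filter (fun p => p.1 ≠ ι ∧ p.2 ≠ ι)⟩)
    (fun q _ => q.2 ∪ q.1.image (gmap ι)) ?_ ?_ ?_ ?_ ?_
  · intro E hE
    simp only [Finset.mem_filter, Finset.mem_powerset] at hE
    obtain ⟨hEsub, hconn⟩ := hE
    simp only [Finset.mem_sigma, Finset.mem_powerset, Finset.mem_filter]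
    refine ⟨Finset.filter_subset _ _, ?_, ?_⟩
    · intro p hp
      simp only [Finset.mem_filter] at hp
      obtain ⟨hpE, hp1, hp2⟩ := hp
      obtain ⟨h1, h2, h3⟩ := mem_edges.mp (hEsub hpE)
      exact mem_edges.mpr ⟨Finset.mem_erase.mpr ⟨hp1, h1⟩, Finset.mem_erase.mpr ⟨hp2, h2⟩, h3⟩
    · intro j hj
      obtain ⟨hjι, hjJ⟩ := Finset.mem_erase.mp hj
      obtain ⟨i, hi, hpath⟩ := hconn j hjJ
      obtain ⟨m, hm, hm2, hpath'⟩ := conn_forward hpath hjι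
      rcases hm2 with rfl | hadj
      · exact ⟨m, Finset.mem_union_left _ (Finset.mem_erase.mpr ⟨hm, hi⟩), hpath'⟩
      · refine ⟨m, Finset.mem_union_right _ ?_, hpath'⟩
        have hmJ : m ∈ J := by
          rcases hadj with h1 | h1
          · exact (mem_edges.mp (hEsub h1)).2.1
          · exact (mem_edges.mp (hEsub h1)).1
        exact Finset.mem_filter.mpr ⟨Finset.mem_erase.mpr ⟨hm, hmJ⟩, hadj⟩
  · rintro ⟨N, E'⟩ hq
    simp only [Finset.mem_sigma, Finset.mem_powerset, Finset.mem_filter] at hq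
    obtain ⟨hN, hE'sub, hconn⟩ := hq
    simp only [Finset.mem_filter, Finset.mem_powerset]
    constructor
    · intro p hp
      rcases Finset.mem_union.mp hp with h1 | h1
      · obtain ⟨h1, h2, h3⟩ := mem_edges.mp (hE'sub h1)
        exact mem_edges.mpr ⟨Finset.mem_of_mem_erase h1, Finset.mem_of_mem_erase h2, h3⟩
      · obtain ⟨n, hn, rfl⟩ := Finset.mem_image.mp h1
        obtain ⟨hnι, hnJ⟩ := Finset.mem_erase.mp (hN hn)
        unfold gmap
        split
        · exact mem_edges.mpr ⟨hIJ hι, hnJ, by omega⟩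
        · exact mem_edges.mpr ⟨hnJ, hIJ hι, by omega⟩
    · refine conn_backward hι Finset.subset_union_left (fun n hn => ?_) hconn
      exact adjOf_gmap (Finset.mem_union_right _ (Finset.mem_image_of_mem _ hn))
  · intro E hE
    simp only [Finset.mem_filter, Finset.mem_powerset] at hE
    exact decomp hE.1
  · rintro ⟨N, E'⟩ hq
    simp only [Finset.mem_sigma, Finset.mem_powerset, Finset.mem_filter] at hq
    obtain ⟨hN, hE'sub, hconn⟩ := hq
    have hgm : ∀ n ∈ N, ∀ q, q = gmap ι n → (q.1 = ι ∨ q.2 = ι) ∧ (q.1 = n ∨ q.2 = n) := by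
      rintro n hn q rfl
      unfold gmap
      split <;> simp
    have hE'ι : ∀ p ∈ E', p.1 ≠ ι ∧ p.2 ≠ ι := by
      intro p hp
      obtain ⟨h1, h2, -⟩ := mem_edges.mp (hE'sub hp)
      exact ⟨(Finset.mem_erase.mp h1).1, (Finset.mem_erase.mp h2).1⟩
    have hmemU : ∀ p : ℕ × ℕ, p ∈ E' ∪ N.image (gmap ι) ↔ p ∈ E' ∨ ∃ m ∈ N, gmap ι m = p := by
      intro p; simp [Finset.mem_union, Finset.mem_image]
    have hfst : ((J.erase ι).filter
        (fun n => (ι,n) ∈ E' ∪ N.image (gmap ι) ∨ (n,ι) ∈ E' ∪ N.image (gmap ι))) = N := by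
      ext n
      simp only [Finset.mem_filter]
      constructor
      · rintro ⟨hnJ, hor⟩
        have hnι := (Finset.mem_erase.mp hnJ).1
        rcases hor with h1 | h1 <;> rcases (hmemU _).mp h1 with h2 | ⟨m, hm, hmeq⟩
        · exact absurd rfl (hE'ι _ h2).1
        · unfold gmap at hmeq
          split at hmeq <;> simp only [Prod.mk.injEq] at hmeq
          · exact hmeq.2 ▸ hm
          · exact absurd hmeq.2.symm hnι
        · exact absurd rfl (hE'ι _ h2).2
        · unfold gmap at hmeq
          split at hmeq <;> simp only [Prod.mk.injEq] at hmeq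
          · exact absurd hmeq.1.symm hnι
          · exact hmeq.1 ▸ hm
      · intro hn
        refine ⟨hN hn, ?_⟩
        by_cases h : ι < n
        · exact Or.inl ((hmemU _).mpr (Or.inr ⟨n, hn, by simp [gmap, h]⟩))
        · exact Or.inr ((hmemU _).mpr (Or.inr ⟨n, hn, by simp [gmap, h]⟩))
    have hsnd : (E' ∪ N.image (gmap ι)).filter (fun p => p.1 ≠ ι ∧ p.2 ≠ ι) = E' := by
      rw [Finset.filter_union]
      have h1 : E'.filter (fun p => p.1 ≠ ι ∧ p.2 ≠ ι) = E' :=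
        Finset.filter_true_of_mem hE'ι
      have h2 : (N.image (gmap ι)).filter (fun p => p.1 ≠ ι ∧ p.2 ≠ ι) = ∅ := by
        rw [Finset.filter_eq_empty_iff]
        rintro p hp
        obtain ⟨n, hn, rfl⟩ := Finset.mem_image.mp hp
        rcases (hgm n hn _ rfl).1 with h | h
        · exact fun hc => hc.1 h
        · exact fun hc => hc.2 h
      rw [h1, h2, Finset.union_empty]
    simp only [hfst, hsnd]
  · intro E hE
    simp only [Finset.mem_filter, Finset.mem_powerset] at hE
    obtain ⟨hEsub, -⟩ := hE
    have hιJ' : ι ∉ J.erase ι := Finset.notMem_erase _ _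
    have hιN : ι ∉ (J.erase ι).filter (fun n => (ι,n) ∈ E ∨ (n,ι) ∈ E) :=
      fun h => hιJ' (Finset.mem_filter.mp h).1
    have hdisj : Disjoint (E.filter (fun p => p.1 ≠ ι ∧ p.2 ≠ ι))
        (((J.erase ι).filter (fun n => (ι,n) ∈ E ∨ (n,ι) ∈ E)).image (gmap ι)) := by
      rw [Finset.disjoint_left]
      intro p hp hp'
      obtain ⟨-, hp1, hp2⟩ := Finset.mem_filter.mp hp
      obtain ⟨n, -, rfl⟩ := Finset.mem_image.mp hp'
      unfold gmap at hp1 hp2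
      split at hp1 <;> simp_all
    conv_lhs => rw [← decomp (ι := ι) hEsub]
    rw [Finset.prod_union hdisj,
      Finset.prod_image (fun a ha b hb h => gmap_injOn hιN ha hb h), mul_comm]
    congr 1
    refine Finset.prod_congr rfl fun n hn => ?_
    have hnι : n ≠ ι := fun h => hιN (h ▸ hn)
    by_cases h : ι < n
    · simp [gmap, h]
    · show f (x (gmap ι n).1) (x (gmap ι n).2) = f (x ι) (x n)
      rw [gmap, if_neg h]
      exact hf _ _


/-- Recursion for multi-rooted graphs: removing the root `ι = min I`,
`ψ(I,J;x) = ∏_{i ∈ I'} (1 + f(x_ι, x_i)) ∑_{L ⊆ J∖I} (∏_{ℓ∈L} f(x_ι, x_ℓ)) ψ(I'∪L, J'; x)`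
with `I' = I ∖ {ι}`, `J' = J ∖ {ι}`. -/
theorem stmt_8 {X : Type*} (f : X → X → ℝ) (hf : ∀ x y, f x y = f y x)
    (I J : Finset ℕ) (hIJ : I ⊆ J) (hI : I.Nonempty) (x : ℕ → X) :
    psiMulti f I J x =
      (∏ i ∈ I.erase (I.min' hI), (1 + f (x (I.min' hI)) (x i))) *
        ∑ L ∈ (J \ I).powerset,
          (∏ ℓ ∈ L, f (x (I.min' hI)) (x ℓ)) *
            psiMulti f ((I.erase (I.min' hI)) ∪ L) (J.erase (I.min' hI)) x := by
  set ι := I.min' hI with hιdef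
  have hι : ι ∈ I := I.min'_mem hI
  rw [psi_step f hf hι hIJ x]
  -- expand the product as a sum over subsets
  have hprod : (∏ i ∈ I.erase ι, (1 + f (x ι) (x i))) =
      ∑ S ∈ (I.erase ι).powerset, ∏ i ∈ S, f (x ι) (x i) := by
    rw [Finset.prod_congr rfl (fun i _ => add_comm 1 (f (x ι) (x i))), Finset.prod_add]
    exact Finset.sum_congr rfl fun S hS => by rw [Finset.prod_const_one, mul_one]
  rw [hprod, Finset.sum_mul_sum]
  rw [Finset.sum_sigma']
  have hSJ : I.erase ι ⊆ J.erase ι := Finset.erase_subset_erase _ hIJ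
  have hLJ : J \ I ⊆ J.erase ι := by
    intro j hj
    obtain ⟨hjJ, hjI⟩ := Finset.mem_sdiff.mp hj
    exact Finset.mem_erase.mpr ⟨fun h => hjI (h ▸ hι), hjJ⟩
  have hdisj : Disjoint (I.erase ι) (J \ I) := by
    rw [Finset.disjoint_left]
    intro a ha ha'
    exact (Finset.mem_sdiff.mp ha').2 (Finset.mem_of_mem_erase ha)
  have hpart : I.erase ι ∪ (J \ I) = J.erase ι := by
    apply Finset.Subset.antisymm (Finset.union_subset hSJ hLJ)
    intro j hj
    obtain ⟨hjι, hjJ⟩ := Finset.mem_erase.mp hj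
    by_cases h : j ∈ I
    · exact Finset.mem_union_left _ (Finset.mem_erase.mpr ⟨hjι, h⟩)
    · exact Finset.mem_union_right _ (Finset.mem_sdiff.mpr ⟨hjJ, h⟩)
  refine (Finset.sum_bij'
    (fun q _ => q.1 ∪ q.2)
    (fun N _ => ⟨N ∩ I.erase ι, N ∩ (J \ I)⟩) ?_ ?_ ?_ ?_ ?_).symm
  · rintro ⟨S, L⟩ hq
    simp only [Finset.mem_sigma, Finset.mem_powerset] at hq
    exact Finset.mem_powerset.mpr
      (Finset.union_subset (hq.1.trans hSJ) (hq.2.trans hLJ))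
  · intro N hN
    simp only [Finset.mem_sigma, Finset.mem_powerset]
    exact ⟨Finset.inter_subset_right, Finset.inter_subset_right⟩
  · rintro ⟨S, L⟩ hq
    simp only [Finset.mem_sigma, Finset.mem_powerset] at hq
    obtain ⟨hS, hL⟩ := hq
    have h1 : (S ∪ L) ∩ I.erase ι = S := by
      rw [Finset.union_inter_distrib_right, Finset.inter_eq_left.mpr hS,
        Finset.disjoint_iff_inter_eq_empty.mp (Finset.disjoint_of_subset_left hL hdisj.symm), Finset.union_empty]
    have h2 : (S ∪ L) ∩ (J \ I) = L := by
      rw [Finset.union_inter_distrib_right, Finset.inter_eq_left.mpr hL,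
        Finset.disjoint_iff_inter_eq_empty.mp (Finset.disjoint_of_subset_left hS hdisj), Finset.empty_union]
    simp only [h1, h2]
  · intro N hN
    simp only
    rw [← Finset.inter_union_distrib_left, hpart,
      Finset.inter_eq_left.mpr (Finset.mem_powerset.mp hN)]
  · rintro ⟨S, L⟩ hq
    simp only [Finset.mem_sigma, Finset.mem_powerset] at hq
    obtain ⟨hS, hL⟩ := hq
    have hdSL : Disjoint S L := Finset.disjoint_of_subset_left hS
      (Finset.disjoint_of_subset_right hL hdisj)
    have hU : I.erase ι ∪ (S ∪ L) = I.erase ι ∪ L := by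
      rw [← Finset.union_assoc, Finset.union_eq_left.mpr hS]
    simp only [Finset.prod_union hdSL, hU]
    ring
end

section
/- Factorization over connected components: for a symmetric function f : X × X → ℝ, ∑_{G ∈ G_n} ∏_{{i,j}∈E(G)} f(x_i,x_j) = ∑_{r=1}^n ∑_{{V_1,...,V_r} ∈ P_n} ∏_{k=1}^r φ^T_{V_k}(x), where φ^T_V(x) = ∑_{G connected graph on V} ∏_{{i,j}∈E(G)} f(x_i,x_j) and P_n is the set of partitions of {1,...,n}. -/
open scoped Classical

/-- Ursell function `φ^T_V(x) = ∑_{G connected graph on V} ∏_{{i,j}∈E(G)} f(x_i,x_j)`,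
graphs on the vertex set `V` being encoded by their edge sets (pairs `(i,j)` with
`i < j`), connectedness meaning that any two vertices of `V` are joined by a path. -/
noncomputable def ursell {X : Type*} {n : ℕ} (f : X → X → ℝ) (V : Finset (Fin n))
    (x : Fin n → X) : ℝ :=
  ∑ E ∈ ((V ×ˢ V).filter (fun p : Fin n × Fin n => p.1 < p.2)).powerset.filter
      (fun E => ∀ i ∈ V, ∀ j ∈ V,
        Relation.ReflTransGen (fun u v => (u, v) ∈ E ∨ (v, u) ∈ E) i j),
    ∏ p ∈ E, f (x p.1) (x p.2)

namespace Stmt10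

variable {n : ℕ}

/-- Reachability through the edge set `E`. -/
def Reach (E : Finset (Fin n × Fin n)) : Fin n → Fin n → Prop :=
  Relation.ReflTransGen (fun u v => (u, v) ∈ E ∨ (v, u) ∈ E)

lemma Reach.refl {E : Finset (Fin n × Fin n)} {i : Fin n} : Reach E i i :=
  Relation.ReflTransGen.refl

lemma Reach.symm {E : Finset (Fin n × Fin n)} {i j : Fin n} (h : Reach E i j) : Reach E j i :=
  by
    induction h with
    | refl => exact Relation.ReflTransGen.refl
    | tail _ hbc ih => exact Relation.ReflTransGen.head (Or.symm hbc) ih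

lemma Reach.trans {E : Finset (Fin n × Fin n)} {i j k : Fin n} (h : Reach E i j)
    (h' : Reach E j k) : Reach E i k :=
  Relation.ReflTransGen.trans h h'

lemma Reach.mono {E E' : Finset (Fin n × Fin n)} (hEE : E ⊆ E') {i j : Fin n}
    (h : Reach E i j) : Reach E' i j :=
  by
    induction h with
    | refl => exact Relation.ReflTransGen.refl
    | tail _ hbc ih => exact Relation.ReflTransGen.tail ih (hbc.imp (fun h => hEE h) (fun h => hEE h))

/-- Connected component of `i` in the graph `E`. -/
noncomputable def comp (E : Finset (Fin n × Fin n)) (i : Fin n) : Finset (Fin n) :=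
  Finset.univ.filter (Reach E i)

/-- The partition of `Fin n` into connected components of `E`. -/
noncomputable def part (E : Finset (Fin n × Fin n)) : Finset (Finset (Fin n)) :=
  Finset.image (comp E) Finset.univ

/-- Restriction of the edge set `E` to the vertex set `V`. -/
noncomputable def restr (E : Finset (Fin n × Fin n)) (V : Finset (Fin n)) :
    Finset (Fin n × Fin n) :=
  E.filter (fun p => p.1 ∈ V ∧ p.2 ∈ V)

lemma restr_subset (E : Finset (Fin n × Fin n)) (V : Finset (Fin n)) : restr E V ⊆ E :=
  Finset.filter_subset _ _

lemma mem_comp {E : Finset (Fin n × Fin n)} {i j : Fin n} : j ∈ comp E i ↔ Reach E i j := by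
  simp [comp]

lemma comp_eq_of_reach {E : Finset (Fin n × Fin n)} {i j : Fin n} (h : Reach E i j) :
    comp E i = comp E j := by
  ext k
  simp only [mem_comp]
  exact ⟨fun hk => h.symm.trans hk, fun hk => h.trans hk⟩

lemma blockEq {E : Finset (Fin n × Fin n)} {V : Finset (Fin n)} {i : Fin n}
    (hV : V ∈ part E) (hi : i ∈ V) : V = comp E i := by
  simp only [part, Finset.mem_image] at hV
  obtain ⟨a, -, rfl⟩ := hV
  exact comp_eq_of_reach (mem_comp.mp hi)

lemma part_valid (E : Finset (Fin n × Fin n)) :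
    (∀ V ∈ part E, V.Nonempty) ∧ ∀ i : Fin n, ∃! V, V ∈ part E ∧ i ∈ V := by
  constructor
  · intro V hV
    simp only [part, Finset.mem_image] at hV
    obtain ⟨a, -, rfl⟩ := hV
    exact ⟨a, mem_comp.mpr Reach.refl⟩
  · intro i
    refine ⟨comp E i, ⟨Finset.mem_image_of_mem _ (Finset.mem_univ i),
      mem_comp.mpr Reach.refl⟩, ?_⟩
    rintro V ⟨hV, hi⟩
    exact blockEq hV hi

lemma uniq {P : Finset (Finset (Fin n))} (hP : ∀ i : Fin n, ∃! V, V ∈ P ∧ i ∈ V)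
    {V W : Finset (Fin n)} {i : Fin n} (hV : V ∈ P) (hW : W ∈ P) (hiV : i ∈ V)
    (hiW : i ∈ W) : V = W := by
  obtain ⟨U, -, hU⟩ := hP i
  rw [hU V ⟨hV, hiV⟩, hU W ⟨hW, hiW⟩]

lemma reach_restr {E : Finset (Fin n × Fin n)} {i j : Fin n} (h : Reach E i j) :
    Reach (restr E (comp E i)) i j := by
  induction h with
  | refl => exact Reach.refl
  | @tail b c hb hbc ih =>
    have hbV : b ∈ comp E i := mem_comp.mpr hb
    have hcV : c ∈ comp E i := mem_comp.mpr (Relation.ReflTransGen.tail hb hbc)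
    refine Relation.ReflTransGen.tail ih ?_
    rcases hbc with h | h
    · exact Or.inl (Finset.mem_filter.mpr ⟨h, hbV, hcV⟩)
    · exact Or.inr (Finset.mem_filter.mpr ⟨h, hcV, hbV⟩)

variable {X : Type*}

/-- The summand set of `ursell`. -/
noncomputable def connSet (V : Finset (Fin n)) : Finset (Finset (Fin n × Fin n)) :=
  ((V ×ˢ V).filter (fun p : Fin n × Fin n => p.1 < p.2)).powerset.filter
      (fun E => ∀ i ∈ V, ∀ j ∈ V, Reach E i j)

lemma ursell_eq (f : X → X → ℝ) (V : Finset (Fin n)) (x : Fin n → X) :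
    ursell f V x = ∑ E ∈ connSet V, ∏ p ∈ E, f (x p.1) (x p.2) := rfl

lemma mem_connSet {V : Finset (Fin n)} {E : Finset (Fin n × Fin n)} :
    E ∈ connSet V ↔ (∀ p ∈ E, p.1 ∈ V ∧ p.2 ∈ V ∧ p.1 < p.2) ∧
      ∀ i ∈ V, ∀ j ∈ V, Reach E i j := by
  simp only [connSet, Finset.mem_filter, Finset.mem_powerset]
  constructor
  · rintro ⟨hsub, hconn⟩
    refine ⟨fun p hp => ?_, hconn⟩
    have := hsub hp
    simp only [Finset.mem_filter, Finset.mem_product] at this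
    exact ⟨this.1.1, this.1.2, this.2⟩
  · rintro ⟨hsub, hconn⟩
    refine ⟨fun p hp => ?_, hconn⟩
    obtain ⟨h1, h2, h3⟩ := hsub p hp
    simp only [Finset.mem_filter, Finset.mem_product]
    exact ⟨⟨h1, h2⟩, h3⟩

section FixedPartition

variable {P : Finset (Finset (Fin n))}

/-- Union of a family of edge sets indexed by blocks of `P`. -/
noncomputable def unionG (P : Finset (Finset (Fin n)))
    (g : ∀ V : Finset (Fin n), V ∈ P → Finset (Fin n × Fin n)) : Finset (Fin n × Fin n) :=
  P.attach.biUnion (fun V => g V.1 V.2)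

lemma mem_unionG {g : ∀ V : Finset (Fin n), V ∈ P → Finset (Fin n × Fin n)}
    {p : Fin n × Fin n} :
    p ∈ unionG P g ↔ ∃ V : Finset (Fin n), ∃ hV : V ∈ P, p ∈ g V hV := by
  simp only [unionG, Finset.mem_biUnion, Finset.mem_attach, true_and, Subtype.exists]

lemma reach_unionG (hP : ∀ i : Fin n, ∃! V, V ∈ P ∧ i ∈ V)
    {g : ∀ V : Finset (Fin n), V ∈ P → Finset (Fin n × Fin n)}
    (hg : ∀ V (hV : V ∈ P), g V hV ∈ connSet V)
    {Vi : Finset (Fin n)} (hVi : Vi ∈ P) {i j : Fin n} (hiVi : i ∈ Vi)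
    (h : Reach (unionG P g) i j) : j ∈ Vi := by
  induction h with
  | refl => exact hiVi
  | @tail b c hb hbc ih =>
    have : ∃ W : Finset (Fin n), ∃ hW : W ∈ P, b ∈ W ∧ c ∈ W := by
      rcases hbc with h | h
      · obtain ⟨W, hW, hmem⟩ := mem_unionG.mp h
        obtain ⟨h1, h2, -⟩ := (mem_connSet.mp (hg W hW)).1 _ hmem
        exact ⟨W, hW, h1, h2⟩
      · obtain ⟨W, hW, hmem⟩ := mem_unionG.mp h
        obtain ⟨h1, h2, -⟩ := (mem_connSet.mp (hg W hW)).1 _ hmem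
        exact ⟨W, hW, h2, h1⟩
    obtain ⟨W, hW, hbW, hcW⟩ := this
    have : Vi = W := uniq hP hVi hW ih hbW
    rw [this]
    exact hcW

lemma comp_unionG (hP : ∀ i : Fin n, ∃! V, V ∈ P ∧ i ∈ V)
    {g : ∀ V : Finset (Fin n), V ∈ P → Finset (Fin n × Fin n)}
    (hg : ∀ V (hV : V ∈ P), g V hV ∈ connSet V)
    {Vi : Finset (Fin n)} (hVi : Vi ∈ P) {i : Fin n} (hiVi : i ∈ Vi) :
    comp (unionG P g) i = Vi := by
  ext j
  rw [mem_comp]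
  constructor
  · exact reach_unionG hP hg hVi hiVi
  · intro hj
    have hconn := (mem_connSet.mp (hg Vi hVi)).2 i hiVi j hj
    refine hconn.mono ?_
    intro p hp
    exact mem_unionG.mpr ⟨Vi, hVi, hp⟩

lemma part_unionG (hNe : ∀ V ∈ P, V.Nonempty) (hP : ∀ i : Fin n, ∃! V, V ∈ P ∧ i ∈ V)
    {g : ∀ V : Finset (Fin n), V ∈ P → Finset (Fin n × Fin n)}
    (hg : ∀ V (hV : V ∈ P), g V hV ∈ connSet V) :
    part (unionG P g) = P := by
  ext V
  simp only [part, Finset.mem_image, Finset.mem_univ, true_and]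
  constructor
  · rintro ⟨a, rfl⟩
    obtain ⟨W, ⟨hW, haW⟩, -⟩ := hP a
    rw [comp_unionG hP hg hW haW]
    exact hW
  · intro hV
    obtain ⟨a, haV⟩ := hNe V hV
    exact ⟨a, comp_unionG hP hg hV haV⟩

lemma biUnion_restr {E : Finset (Fin n × Fin n)} (hE : part E = P) :
    unionG P (fun V _ => restr E V) = E := by
  ext p
  rw [mem_unionG]
  constructor
  · rintro ⟨V, hV, hp⟩
    exact restr_subset E V hp
  · intro hp
    have h12 : Reach E p.1 p.2 := Relation.ReflTransGen.single (Or.inl hp)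
    refine ⟨comp E p.1, ?_, ?_⟩
    · rw [← hE]; exact Finset.mem_image_of_mem _ (Finset.mem_univ p.1)
    · exact Finset.mem_filter.mpr ⟨hp, mem_comp.mpr Reach.refl, mem_comp.mpr h12⟩

lemma restr_mem_connSet {E : Finset (Fin n × Fin n)}
    (hsub : E ⊆ Finset.univ.filter (fun p : Fin n × Fin n => p.1 < p.2))
    (hE : part E = P) {V : Finset (Fin n)} (hV : V ∈ P) : restr E V ∈ connSet V := by
  rw [mem_connSet]
  constructor
  · intro p hp
    obtain ⟨hpE, h1, h2⟩ := Finset.mem_filter.mp hp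
    have := Finset.mem_filter.mp (hsub hpE)
    exact ⟨h1, h2, this.2⟩
  · intro i hi j hj
    have hVP : V ∈ part E := hE ▸ hV
    have hVi : V = comp E i := blockEq hVP hi
    have hreach : Reach E i j := mem_comp.mp (hVi ▸ hj)
    have := reach_restr hreach
    rwa [← hVi] at this

lemma disjoint_restr {E : Finset (Fin n × Fin n)} (hP : ∀ i : Fin n, ∃! V, V ∈ P ∧ i ∈ V) :
    (↑P.attach : Set {x // x ∈ P}).PairwiseDisjoint
      (fun V : {x // x ∈ P} => restr E V.1) := by
  intro a _ b _ hab
  simp only [Function.onFun]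
  rw [Finset.disjoint_left]
  intro p hpa hpb
  obtain ⟨-, ha1, -⟩ := Finset.mem_filter.mp hpa
  obtain ⟨-, hb1, -⟩ := Finset.mem_filter.mp hpb
  exact hab (Subtype.ext (uniq hP a.2 b.2 ha1 hb1))

lemma fiber_sum (f : X → X → ℝ) (x : Fin n → X)
    (hNe : ∀ V ∈ P, V.Nonempty) (hP : ∀ i : Fin n, ∃! V, V ∈ P ∧ i ∈ V) :
    ∑ E ∈ ((Finset.univ.filter (fun p : Fin n × Fin n => p.1 < p.2)).powerset.filter
        (fun E => part E = P)), ∏ p ∈ E, f (x p.1) (x p.2) =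
      ∏ V ∈ P, ursell f V x := by
  simp only [ursell_eq]
  rw [Finset.prod_sum]
  refine Finset.sum_bij' (fun E _ => fun V _ => restr E V) (fun g _ => unionG P g)
    ?_ ?_ ?_ ?_ ?_
  · -- restr family lands in the pi set
    intro E hE
    obtain ⟨hsub, hpart⟩ := Finset.mem_filter.mp hE
    rw [Finset.mem_powerset] at hsub
    rw [Finset.mem_pi]
    intro V hV
    exact restr_mem_connSet hsub hpart hV
  · -- unionG lands in the fiber
    intro g hg
    rw [Finset.mem_pi] at hg
    rw [Finset.mem_filter, Finset.mem_powerset]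
    constructor
    · intro p hp
      obtain ⟨V, hV, hpg⟩ := mem_unionG.mp hp
      obtain ⟨-, -, hlt⟩ := (mem_connSet.mp (hg V hV)).1 p hpg
      exact Finset.mem_filter.mpr ⟨Finset.mem_univ p, hlt⟩
    · exact part_unionG hNe hP hg
  · -- left inverse
    intro E hE
    obtain ⟨-, hpart⟩ := Finset.mem_filter.mp hE
    exact biUnion_restr hpart
  · -- right inverse
    intro g hg
    rw [Finset.mem_pi] at hg
    funext V hV
    ext p
    constructor
    · intro hp
      obtain ⟨hpU, h1, h2⟩ := Finset.mem_filter.mp hp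
      obtain ⟨W, hW, hpg⟩ := mem_unionG.mp hpU
      obtain ⟨hW1, -, -⟩ := (mem_connSet.mp (hg W hW)).1 p hpg
      have : W = V := uniq hP hW hV hW1 h1
      subst this
      exact hpg
    · intro hp
      obtain ⟨h1, h2, -⟩ := (mem_connSet.mp (hg V hV)).1 p hp
      exact Finset.mem_filter.mpr ⟨mem_unionG.mpr ⟨V, hV, hp⟩, h1, h2⟩
  · -- weights
    intro E hE
    obtain ⟨-, hpart⟩ := Finset.mem_filter.mp hE
    conv_lhs => rw [← biUnion_restr (E := E) hpart]
    exact Finset.prod_biUnion (disjoint_restr hP)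

end FixedPartition

end Stmt10

/-- Factorization over connected components:
`∑_{G ∈ 𝒢_n} ∏_{{i,j}∈E(G)} f(x_i,x_j) = ∑_{partitions {V_1,…,V_r} of [n]} ∏_k φ^T_{V_k}(x)`. -/
theorem stmt_10 {X : Type*} (n : ℕ) (f : X → X → ℝ) (hf : ∀ x y, f x y = f y x)
    (x : Fin n → X) :
    ∑ E ∈ (Finset.univ.filter (fun p : Fin n × Fin n => p.1 < p.2)).powerset,
        ∏ p ∈ E, f (x p.1) (x p.2) =
      ∑ P ∈ Finset.univ.filter (fun P : Finset (Finset (Fin n)) =>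
          (∀ V ∈ P, V.Nonempty) ∧ ∀ i : Fin n, ∃! V, V ∈ P ∧ i ∈ V),
        ∏ V ∈ P, ursell f V x := by
  rw [← Finset.sum_fiberwise_of_maps_to (g := Stmt10.part)
    (t := Finset.univ.filter (fun P : Finset (Finset (Fin n)) =>
      (∀ V ∈ P, V.Nonempty) ∧ ∀ i : Fin n, ∃! V, V ∈ P ∧ i ∈ V))
    (fun E _ => Finset.mem_filter.mpr ⟨Finset.mem_univ _, Stmt10.part_valid E⟩)
    (fun E => ∏ p ∈ E, f (x p.1) (x p.2))]
  refine Finset.sum_congr rfl ?_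
  intro P hP
  obtain ⟨-, hNe, hPu⟩ := Finset.mem_filter.mp hP
  exact Stmt10.fiber_sum f x hNe hPu
end

section
/- Tilting preserves the Gibbs property: let P be a Gibbs measure with activity z and nonnegative pair potential v (i.e. P satisfies the GNZ equation), and let h : X → [0,∞) be measurable with ∫ h dλ_z < ∞. Define P_h by dP_h/dP(η) = exp(-∫ h dη) / E_P[exp(-∫ h dη)]. Then the normalizing constant lies in [exp(-∫ h dλ_z), 1] (in particular is positive and finite), and P_h is a Gibbs measure with activity z·e^{-h}: it satisfies E_{P_h}[∫ F(x,η) dη(x)] = ∫ E_{P_h}[F(x, η+δ_x) e^{-W(x;η)}] z(x)e^{-h(x)} dλ(x) for all measurable F ≥ 0. -/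
open MeasureTheory

/-- `e^{-w}` for `w ∈ [0,∞]`, with `e^{-∞} = 0`. -/
noncomputable def expNeg (w : ENNReal) : ENNReal :=
  if w = ⊤ then 0 else ENNReal.ofReal (Real.exp (-w.toReal))

lemma measurable_expNeg : Measurable expNeg := by
  have hm : Measurable fun w : ENNReal => ENNReal.ofReal (Real.exp (-w.toReal)) :=
    ENNReal.measurable_ofReal.comp (Real.measurable_exp.comp ENNReal.measurable_toReal.neg)
  exact Measurable.ite (by simpa using MeasurableSet.singleton (⊤ : ENNReal)) measurable_const hm

lemma expNeg_le_one (w : ENNReal) : expNeg w ≤ 1 := by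
  unfold expNeg
  split
  · exact zero_le_one
  · exact ENNReal.ofReal_le_one.mpr
      (Real.exp_le_one_iff.mpr (neg_nonpos.mpr ENNReal.toReal_nonneg))

lemma expNeg_ne_top (w : ENNReal) : expNeg w ≠ ⊤ :=
  ((expNeg_le_one w).trans_lt ENNReal.one_lt_top).ne

lemma expNeg_pos {w : ENNReal} (hw : w ≠ ⊤) : 0 < expNeg w := by
  unfold expNeg
  rw [if_neg hw]
  exact ENNReal.ofReal_pos.mpr (Real.exp_pos _)

lemma expNeg_add (a b : ENNReal) : expNeg (a + b) = expNeg a * expNeg b := by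
  unfold expNeg
  rcases eq_or_ne a ⊤ with ha | ha
  · simp [ha]
  rcases eq_or_ne b ⊤ with hb | hb
  · simp [hb]
  rw [if_neg (by simp [ENNReal.add_eq_top, ha, hb]), if_neg ha, if_neg hb,
    ENNReal.toReal_add ha hb, neg_add, Real.exp_add,
    ENNReal.ofReal_mul (Real.exp_nonneg _)]

/-- Tilting preserves the Gibbs property.  Point configurations are modelled as
measures `η` on `X`; `P` is a Gibbs measure for the nonnegative pair potential `v`
and activity `z` in the sense of the GNZ equation, where `W(x;η) = ∫ v(x,y) dη(y)`.
For measurable `h ≥ 0` with `∫ h dλ_z < ∞`, the normalizer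
`Z = E_P[e^{-∫ h dη}]` satisfies `e^{-∫ h dλ_z} ≤ Z ≤ 1`, and the tilted measure
`P_h` with density `e^{-∫ h dη}/Z` satisfies the GNZ equation with activity
`z e^{-h}`. -/
theorem stmt_19 {X : Type*} [MeasurableSpace X]
    (lam : Measure X) (z : X → ENNReal) (hz : Measurable z)
    (v : X → X → ENNReal) (hv : Measurable (Function.uncurry v))
    (hv_symm : ∀ x y, v x y = v y x)
    (P : Measure (Measure X)) [IsProbabilityMeasure P]
    (hGNZ : ∀ F : X → Measure X → ENNReal, Measurable (Function.uncurry F) →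
      ∫⁻ η, (∫⁻ x, F x η ∂η) ∂P =
        ∫⁻ x, (∫⁻ η, F x (η + Measure.dirac x) * expNeg (∫⁻ y, v x y ∂η) ∂P) * z x ∂lam)
    (h : X → ℝ) (hh0 : ∀ x, 0 ≤ h x) (hhm : Measurable h)
    (hhint : ∫⁻ x, ENNReal.ofReal (h x) * z x ∂lam ≠ ⊤) :
    (expNeg (∫⁻ x, ENNReal.ofReal (h x) * z x ∂lam)
        ≤ ∫⁻ η, expNeg (∫⁻ x, ENNReal.ofReal (h x) ∂η) ∂P) ∧
    ((∫⁻ η, expNeg (∫⁻ x, ENNReal.ofReal (h x) ∂η) ∂P) ≤ 1) ∧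
    (∀ F : X → Measure X → ENNReal, Measurable (Function.uncurry F) →
      ∫⁻ η, (∫⁻ x, F x η ∂η)
          ∂(P.withDensity (fun η => expNeg (∫⁻ x, ENNReal.ofReal (h x) ∂η) /
              ∫⁻ γ, expNeg (∫⁻ x, ENNReal.ofReal (h x) ∂γ) ∂P)) =
        ∫⁻ x,
          (∫⁻ η, F x (η + Measure.dirac x) * expNeg (∫⁻ y, v x y ∂η)
            ∂(P.withDensity (fun η => expNeg (∫⁻ x, ENNReal.ofReal (h x) ∂η) /
                ∫⁻ γ, expNeg (∫⁻ x, ENNReal.ofReal (h x) ∂γ) ∂P))) *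
          (z x * ENNReal.ofReal (Real.exp (-h x))) ∂lam) := by
  have hY : Measurable fun η : Measure X => ∫⁻ x, ENNReal.ofReal (h x) ∂η :=
    Measure.measurable_lintegral hhm.ennreal_ofReal
  -- upper bound for Z
  have hZ1 : (∫⁻ η, expNeg (∫⁻ x, ENNReal.ofReal (h x) ∂η) ∂P) ≤ 1 := by
    calc (∫⁻ η, expNeg (∫⁻ x, ENNReal.ofReal (h x) ∂η) ∂P)
        ≤ ∫⁻ _η, 1 ∂P := lintegral_mono fun η => expNeg_le_one _
      _ = 1 := by simp
  -- first-moment bound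
  have hmom : (∫⁻ η, ∫⁻ x, ENNReal.ofReal (h x) ∂η ∂P)
      ≤ ∫⁻ x, ENNReal.ofReal (h x) * z x ∂lam := by
    have hFm : Measurable (Function.uncurry fun (x : X) (_ : Measure X) =>
        ENNReal.ofReal (h x)) := hhm.ennreal_ofReal.comp measurable_fst
    rw [hGNZ _ hFm]
    refine lintegral_mono fun x => mul_le_mul_left ?_ _
    calc (∫⁻ η, ENNReal.ofReal (h x) * expNeg (∫⁻ y, v x y ∂η) ∂P)
        ≤ ∫⁻ _η, ENNReal.ofReal (h x) ∂P :=
          lintegral_mono fun η =>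
            mul_le_of_le_one_right zero_le (expNeg_le_one _)
      _ = ENNReal.ofReal (h x) := by simp
  have hmne : (∫⁻ η, ∫⁻ x, ENNReal.ofReal (h x) ∂η ∂P) ≠ ⊤ :=
    (hmom.trans_lt hhint.lt_top).ne
  have haelt : ∀ᵐ η ∂P, (∫⁻ x, ENNReal.ofReal (h x) ∂η) < ⊤ := ae_lt_top hY hmne
  -- lower bound for Z via Jensen
  have hint1 : Integrable (fun η => (∫⁻ x, ENNReal.ofReal (h x) ∂η).toReal) P :=
    integrable_toReal_of_lintegral_ne_top hY.aemeasurable hmne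
  have hint2 : Integrable
      (fun η => Real.exp (-(∫⁻ x, ENNReal.ofReal (h x) ∂η).toReal)) P := by
    refine Integrable.mono' (integrable_const 1)
      ((Real.measurable_exp.comp hY.ennreal_toReal.neg).aestronglyMeasurable)
      (ae_of_all _ fun η => ?_)
    rw [Real.norm_eq_abs, abs_of_pos (Real.exp_pos _)]
    exact Real.exp_le_one_iff.mpr (neg_nonpos.mpr ENNReal.toReal_nonneg)
  have hjen : Real.exp (∫ η, -(∫⁻ x, ENNReal.ofReal (h x) ∂η).toReal ∂P)
      ≤ ∫ η, Real.exp (-(∫⁻ x, ENNReal.ofReal (h x) ∂η).toReal) ∂P :=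
    convexOn_exp.map_integral_le Real.continuous_exp.continuousOn isClosed_univ
      (ae_of_all _ fun _ => Set.mem_univ _) hint1.neg hint2
  have hZeq : (∫⁻ η, expNeg (∫⁻ x, ENNReal.ofReal (h x) ∂η) ∂P)
      = ENNReal.ofReal
          (∫ η, Real.exp (-(∫⁻ x, ENNReal.ofReal (h x) ∂η).toReal) ∂P) := by
    rw [ofReal_integral_eq_lintegral_ofReal hint2
      (ae_of_all _ fun η => (Real.exp_pos _).le)]
    refine lintegral_congr_ae (haelt.mono fun η hη => ?_)
    simp [expNeg, hη.ne]
  have hZlow : expNeg (∫⁻ x, ENNReal.ofReal (h x) * z x ∂lam)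
      ≤ ∫⁻ η, expNeg (∫⁻ x, ENNReal.ofReal (h x) ∂η) ∂P := by
    rw [hZeq]
    have h1 : (∫ η, -(∫⁻ x, ENNReal.ofReal (h x) ∂η).toReal ∂P)
        = -(∫⁻ η, ∫⁻ x, ENNReal.ofReal (h x) ∂η ∂P).toReal := by
      rw [integral_neg, integral_toReal hY.aemeasurable haelt]
    have h2 : Real.exp (-(∫⁻ x, ENNReal.ofReal (h x) * z x ∂lam).toReal)
        ≤ ∫ η, Real.exp (-(∫⁻ x, ENNReal.ofReal (h x) ∂η).toReal) ∂P := by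
      refine le_trans ?_ hjen
      rw [h1]
      exact Real.exp_le_exp.mpr (neg_le_neg (ENNReal.toReal_mono hhint hmom))
    calc expNeg (∫⁻ x, ENNReal.ofReal (h x) * z x ∂lam)
        = ENNReal.ofReal
            (Real.exp (-(∫⁻ x, ENNReal.ofReal (h x) * z x ∂lam).toReal)) := by
          simp [expNeg, hhint]
      _ ≤ _ := ENNReal.ofReal_le_ofReal h2
  refine ⟨hZlow, hZ1, ?_⟩
  -- tilted GNZ
  set Z := ∫⁻ γ, expNeg (∫⁻ x, ENNReal.ofReal (h x) ∂γ) ∂P with hZdef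
  have hZ0 : Z ≠ 0 := fun hz0 => by
    have := hZlow
    rw [hz0] at this
    exact ((expNeg_pos hhint).trans_le this).false
  have hZinv : Z⁻¹ ≠ ⊤ := ENNReal.inv_ne_top.mpr hZ0
  have hD : Measurable fun η : Measure X =>
      expNeg (∫⁻ x, ENNReal.ofReal (h x) ∂η) / Z :=
    (measurable_expNeg.comp hY).div_const Z
  have hDlt : ∀ᵐ η ∂P, expNeg (∫⁻ x, ENNReal.ofReal (h x) ∂η) / Z < ⊤ :=
    ae_of_all _ fun η => ENNReal.div_lt_top (expNeg_ne_top _) hZ0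
  have hDne : ∀ η : Measure X, expNeg (∫⁻ x, ENNReal.ofReal (h x) ∂η) / Z ≠ ⊤ :=
    fun η => (ENNReal.div_lt_top (expNeg_ne_top _) hZ0).ne
  intro F hF
  simp only [lintegral_withDensity_eq_lintegral_mul_non_measurable P hD hDlt,
    Pi.mul_apply]
  -- rewrite LHS to match GNZ
  have hLHS : (∫⁻ η, (expNeg (∫⁻ x, ENNReal.ofReal (h x) ∂η) / Z)
        * ∫⁻ x, F x η ∂η ∂P)
      = ∫⁻ η, ∫⁻ x, F x η * (expNeg (∫⁻ y, ENNReal.ofReal (h y) ∂η) / Z) ∂η ∂P := by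
    refine lintegral_congr fun η => ?_
    rw [lintegral_mul_const' _ _ (hDne η), mul_comm]
  rw [hLHS]
  have hGm : Measurable (Function.uncurry fun (x : X) (η : Measure X) =>
      F x η * (expNeg (∫⁻ y, ENNReal.ofReal (h y) ∂η) / Z)) :=
    hF.mul (hD.comp measurable_snd)
  rw [hGNZ _ hGm]
  refine lintegral_congr fun x => ?_
  have hYadd : ∀ η : Measure X,
      (∫⁻ y, ENNReal.ofReal (h y) ∂(η + Measure.dirac x))
        = (∫⁻ y, ENNReal.ofReal (h y) ∂η) + ENNReal.ofReal (h x) := by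
    intro η
    rw [lintegral_add_measure, lintegral_dirac' x hhm.ennreal_ofReal]
  have hexp : expNeg (ENNReal.ofReal (h x)) = ENNReal.ofReal (Real.exp (-h x)) := by
    simp [expNeg, ENNReal.toReal_ofReal (hh0 x)]
  have hinner : (∫⁻ η, F x (η + Measure.dirac x)
        * (expNeg (∫⁻ y, ENNReal.ofReal (h y) ∂(η + Measure.dirac x)) / Z)
        * expNeg (∫⁻ y, v x y ∂η) ∂P)
      = (∫⁻ η, (expNeg (∫⁻ x, ENNReal.ofReal (h x) ∂η) / Z)
          * (F x (η + Measure.dirac x) * expNeg (∫⁻ y, v x y ∂η)) ∂P)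
        * ENNReal.ofReal (Real.exp (-h x)) := by
    rw [← lintegral_mul_const' _ _ (by
      exact (ENNReal.ofReal_lt_top).ne : ENNReal.ofReal (Real.exp (-h x)) ≠ ⊤)]
    refine lintegral_congr fun η => ?_
    rw [hYadd η, expNeg_add, hexp, ENNReal.div_eq_inv_mul, ENNReal.div_eq_inv_mul]
    ring
  rw [hinner]
  ring
end
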